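/- arXiv:2211.01273 — 3 statements merged into one kernel-verified Lean document; each statement's English description precedes it below -/
import Mathlib

section
/- On the curve of purely imaginary roots of the characteristic equation, Re((dλ/dτ)⁻¹) evaluated at λ = iν± has the same sign as ±√((a² + 2ω² − (γ+a)²)² − 4ω⁴): it is positive at ν₊ and negative at ν₋. -/
open Complex

lemma hkb_re_formula (γ a ω s τ ν : ℝ) (hν : ν ≠ 0) (ha : a ≠ 0)
    (hs : s = 1 ∨ s = -1)
    (H : (Complex.I * (ν:ℂ))^2 - ((γ:ℂ)+(a:ℂ))*(Complex.I*(ν:ℂ)) + (ω:ℂ)^2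
      + (s:ℂ)*(a:ℂ)*(Complex.I*(ν:ℂ))*Complex.exp (-(Complex.I*(ν:ℂ))*(τ:ℂ)) = 0) :
    (((s:ℂ)*(2*(Complex.I*(ν:ℂ)) - ((γ:ℂ)+(a:ℂ)))*Complex.exp ((Complex.I*(ν:ℂ))*(τ:ℂ)) + (a:ℂ))
        /((a:ℂ)*(Complex.I*(ν:ℂ))^2) - (τ:ℂ)/(Complex.I*(ν:ℂ))).re
    = (ν^4 - ω^4)/(ν^2*((ω^2-ν^2)^2+(γ+a)^2*ν^2)) := by
  have hlne : Complex.I*(ν:ℂ) ≠ 0 := by simp [Complex.ext_iff, hν]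
  set l : ℂ := Complex.I*(ν:ℂ) with hl
  set c : ℂ := (γ:ℂ)+(a:ℂ) with hc
  have hs2 : (s:ℂ)^2 = 1 := by rcases hs with h | h <;> simp [h] <;> norm_num
  have hsne : (s:ℂ) ≠ 0 := by rcases hs with h | h <;> simp [h]
  have hane : (a:ℂ) ≠ 0 := by exact_mod_cast ha
  have h1 : (s:ℂ)*(a:ℂ)*l*Complex.exp (-l*(τ:ℂ)) = -(l^2 - c*l + (ω:ℂ)^2) := by
    linear_combination H
  have hP0 : l^2 - c*l + (ω:ℂ)^2 ≠ 0 := by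
    intro h
    rw [h, neg_zero] at h1
    exact (Complex.exp_ne_zero _) (by
      rcases mul_eq_zero.mp h1 with h' | h'
      · rcases mul_eq_zero.mp h' with h'' | h''
        · exact absurd (mul_eq_zero.mp h'') (by push_neg; exact ⟨hsne, hane⟩)
        · exact absurd h'' hlne
      · exact h')
  have hinv : Complex.exp (-l*(τ:ℂ)) = (Complex.exp (l*(τ:ℂ)))⁻¹ := by
    rw [show -l*(τ:ℂ) = -(l*(τ:ℂ)) by ring, Complex.exp_neg]
  have hE : Complex.exp (l*(τ:ℂ)) * (l^2 - c*l + (ω:ℂ)^2) = -(s:ℂ)*(a:ℂ)*l := by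
    rw [hinv] at h1
    have hEne := Complex.exp_ne_zero (l*(τ:ℂ))
    field_simp at h1
    linear_combination h1
  have hcross : ((s:ℂ)*(2*l - c)*Complex.exp (l*(τ:ℂ)) + (a:ℂ)) * (l^2*(l^2 - c*l + (ω:ℂ)^2))
      = ((ω:ℂ)^2 - l^2) * ((a:ℂ)*l^2) := by
    linear_combination (l^2*(s:ℂ)*(2*l-c))*hE - (a:ℂ)*l^3*(2*l-c)*hs2
  have hexpr : ((s:ℂ)*(2*l - c)*Complex.exp (l*(τ:ℂ)) + (a:ℂ))/((a:ℂ)*l^2) - (τ:ℂ)/l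
      = ((ω:ℂ)^2 - l^2)/(l^2*(l^2 - c*l + (ω:ℂ)^2)) - (τ:ℂ)/l := by
    congr 1
    rw [div_eq_div_iff (by exact mul_ne_zero hane (pow_ne_zero _ hlne))
      (mul_ne_zero (pow_ne_zero _ hlne) hP0)]
    linear_combination hcross
  rw [hexpr]
  -- D ≠ 0 on the real side
  have hD : (ω^2-ν^2)^2+(γ+a)^2*ν^2 ≠ 0 := by
    intro h
    have h1' : ω^2 - ν^2 = 0 := by nlinarith [sq_nonneg (ω^2-ν^2), sq_nonneg ((γ+a)*ν)]
    have h2' : (γ+a)*ν = 0 := by nlinarith [sq_nonneg (ω^2-ν^2), sq_nonneg ((γ+a)*ν)]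
    apply hP0
    have hcl : c*l = 0 := by
      rw [hc, hl]
      have : ((γ+a)*ν : ℝ) = 0 := h2'
      have : (((γ+a)*ν : ℝ) : ℂ) = 0 := by exact_mod_cast this
      push_cast at this
      linear_combination Complex.I * this
    rw [hcl]
    have hl2 : l^2 = -((ν:ℂ)^2) := by rw [hl]; linear_combination (ν:ℂ)^2 * Complex.I_sq
    rw [hl2]
    have : ((ω^2 - ν^2 : ℝ) : ℂ) = 0 := by exact_mod_cast h1'
    push_cast at this
    linear_combination this
  -- rewrite the denominator as real + imaginary
  have hW : l^2*(l^2 - c*l + (ω:ℂ)^2)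
      = ((-(ν^2*(ω^2-ν^2)) : ℝ) : ℂ) + (((γ+a)*ν^3 : ℝ) : ℂ)*Complex.I := by
    rw [hl, hc]
    push_cast
    linear_combination ((Complex.I^2-1)*(ν:ℂ)^4 - ((γ:ℂ)+(a:ℂ))*Complex.I*(ν:ℂ)^3
      + (ν:ℂ)^2*(ω:ℂ)^2) * Complex.I_sq
  have hY : (ω:ℂ)^2 - l^2 = ((ω^2 + ν^2 : ℝ) : ℂ) := by
    rw [hl]; push_cast; linear_combination -(ν:ℂ)^2 * Complex.I_sq
  rw [hW, hY]
  rw [sub_eq_add_neg, Complex.add_re]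
  have hτ : (-((τ:ℂ)/l)).re = 0 := by
    rw [hl]
    simp [Complex.div_re]
  rw [hτ, add_zero]
  rw [Complex.div_re]
  simp only [Complex.ofReal_re, Complex.ofReal_im, Complex.add_re, Complex.add_im,
    Complex.mul_re, Complex.mul_im, Complex.I_re, Complex.I_im, Complex.normSq_apply]
  have hDen : (-(ν ^ 2 * (ω ^ 2 - ν ^ 2)))^2 + ((γ+a)*ν^3)^2 ≠ 0 := by
    have he : (-(ν ^ 2 * (ω ^ 2 - ν ^ 2)))^2 + ((γ+a)*ν^3)^2
        = ν^4*((ω^2-ν^2)^2+(γ+a)^2*ν^2) := by ring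
    rw [he]; exact mul_ne_zero (pow_ne_zero 4 hν) hD
  norm_num
  rw [div_eq_div_iff (by ring_nf; ring_nf at hDen; exact hDen)
    (mul_ne_zero (pow_ne_zero 2 hν) hD)]
  ring

noncomputable def hkbNuPlus (γ a ω : ℝ) : ℝ :=
  Real.sqrt ((a^2 + 2*ω^2 - (γ+a)^2
    + Real.sqrt ((a^2 + 2*ω^2 - (γ+a)^2)^2 - 4*ω^4)) / 2)

noncomputable def hkbNuMinus (γ a ω : ℝ) : ℝ :=
  Real.sqrt ((a^2 + 2*ω^2 - (γ+a)^2
    - Real.sqrt ((a^2 + 2*ω^2 - (γ+a)^2)^2 - 4*ω^4)) / 2)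

set_option maxHeartbeats 1000000 in
/-- On the curves of purely imaginary roots of
`D(λ,τ) = λ² − (γ+a)λ + ω² + s·aλe^{−λτ} = 0`, the real part of
`(dλ/dτ)⁻¹ = (s(2λ−(γ+a))e^{λτ} + a)/(aλ²) − τ/λ` is positive at `λ = iν₊`
and negative at `λ = iν₋`. -/
theorem hkb_crossing_direction (γ a ω s τp τm : ℝ) (hω : 0 < ω) (ha : a ≠ 0)
    (hs : s = 1 ∨ s = -1) (hτp : 0 ≤ τp) (hτm : 0 ≤ τm)
    (hA : 0 < a^2 + 2*ω^2 - (γ+a)^2)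
    (hS : 4*ω^4 < (a^2 + 2*ω^2 - (γ+a)^2)^2) :
    ((Complex.I * (hkbNuPlus γ a ω : ℂ))^2
        - ((γ : ℂ) + (a : ℂ)) * (Complex.I * (hkbNuPlus γ a ω : ℂ)) + (ω : ℂ)^2
        + (s : ℂ) * (a : ℂ) * (Complex.I * (hkbNuPlus γ a ω : ℂ)) *
          Complex.exp (-(Complex.I * (hkbNuPlus γ a ω : ℂ)) * (τp : ℂ)) = 0 →
      0 < (((s : ℂ) * (2 * (Complex.I * (hkbNuPlus γ a ω : ℂ)) - ((γ : ℂ) + (a : ℂ))) *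
            Complex.exp ((Complex.I * (hkbNuPlus γ a ω : ℂ)) * (τp : ℂ)) + (a : ℂ)) /
            ((a : ℂ) * (Complex.I * (hkbNuPlus γ a ω : ℂ))^2)
          - (τp : ℂ) / (Complex.I * (hkbNuPlus γ a ω : ℂ))).re) ∧
    ((Complex.I * (hkbNuMinus γ a ω : ℂ))^2
        - ((γ : ℂ) + (a : ℂ)) * (Complex.I * (hkbNuMinus γ a ω : ℂ)) + (ω : ℂ)^2
        + (s : ℂ) * (a : ℂ) * (Complex.I * (hkbNuMinus γ a ω : ℂ)) *
          Complex.exp (-(Complex.I * (hkbNuMinus γ a ω : ℂ)) * (τm : ℂ)) = 0 →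
      (((s : ℂ) * (2 * (Complex.I * (hkbNuMinus γ a ω : ℂ)) - ((γ : ℂ) + (a : ℂ))) *
            Complex.exp ((Complex.I * (hkbNuMinus γ a ω : ℂ)) * (τm : ℂ)) + (a : ℂ)) /
            ((a : ℂ) * (Complex.I * (hkbNuMinus γ a ω : ℂ))^2)
          - (τm : ℂ) / (Complex.I * (hkbNuMinus γ a ω : ℂ))).re < 0) := by
  set A : ℝ := a^2 + 2*ω^2 - (γ+a)^2 with hAdef
  set S : ℝ := Real.sqrt (A^2 - 4*ω^4) with hSdef
  have hS0 : 0 ≤ A^2 - 4*ω^4 := by nlinarith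
  have hSsq : S^2 = A^2 - 4*ω^4 := Real.sq_sqrt hS0
  have hSpos : 0 < S := Real.sqrt_pos.mpr (by nlinarith)
  have hω4 : 0 < ω^4 := by positivity
  have hSltA : S < A := by
    by_contra h
    push_neg at h
    have h2 : A^2 ≤ S^2 := by nlinarith
    nlinarith
  -- ν₊
  have hνp_sq : (hkbNuPlus γ a ω)^2 = (A + S)/2 := by
    rw [hkbNuPlus, ← hAdef, ← hSdef]
    exact Real.sq_sqrt (by nlinarith)
  have hνp_pos : 0 < hkbNuPlus γ a ω := by
    rw [hkbNuPlus, ← hAdef, ← hSdef]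
    exact Real.sqrt_pos.mpr (by nlinarith)
  have hνm_sq : (hkbNuMinus γ a ω)^2 = (A - S)/2 := by
    rw [hkbNuMinus, ← hAdef, ← hSdef]
    exact Real.sq_sqrt (by nlinarith)
  have hνm_pos : 0 < hkbNuMinus γ a ω := by
    rw [hkbNuMinus, ← hAdef, ← hSdef]
    exact Real.sqrt_pos.mpr (by nlinarith)
  -- sign of ν⁴ − ω⁴
  have hp4 : 0 < (hkbNuPlus γ a ω)^4 - ω^4 := by
    have h4 : (hkbNuPlus γ a ω)^4 = ((A+S)/2)^2 := by
      rw [show (hkbNuPlus γ a ω)^4 = ((hkbNuPlus γ a ω)^2)^2 by ring, hνp_sq]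
    rw [h4]
    nlinarith
  have hm4 : (hkbNuMinus γ a ω)^4 - ω^4 < 0 := by
    have h4 : (hkbNuMinus γ a ω)^4 = ((A-S)/2)^2 := by
      rw [show (hkbNuMinus γ a ω)^4 = ((hkbNuMinus γ a ω)^2)^2 by ring, hνm_sq]
    rw [h4]
    nlinarith
  clear_value A S
  constructor
  · intro H
    rw [hkb_re_formula γ a ω s τp _ (ne_of_gt hνp_pos) ha hs H]
    apply div_pos hp4
    have hlt : ω^2 < (hkbNuPlus γ a ω)^2 := by
      by_contra h
      push_neg at h
      nlinarith [hp4, sq_nonneg ω, sq_nonneg (hkbNuPlus γ a ω)]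
    have hne : 0 < (ω^2 - (hkbNuPlus γ a ω)^2)^2 + (γ+a)^2*(hkbNuPlus γ a ω)^2 :=
      add_pos_of_pos_of_nonneg
        (pow_two_pos_of_ne_zero (ne_of_lt (by linarith)))
        (mul_nonneg (sq_nonneg _) (sq_nonneg _))
    exact mul_pos (pow_pos hνp_pos 2) hne
  · intro H
    rw [hkb_re_formula γ a ω s τm _ (ne_of_gt hνm_pos) ha hs H]
    apply div_neg_of_neg_of_pos hm4
    have hlt : (hkbNuMinus γ a ω)^2 < ω^2 := by
      by_contra h
      push_neg at h
      nlinarith [hm4, sq_nonneg ω, sq_nonneg (hkbNuMinus γ a ω)]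
    have hne : 0 < (ω^2 - (hkbNuMinus γ a ω)^2)^2 + (γ+a)^2*(hkbNuMinus γ a ω)^2 :=
      add_pos_of_pos_of_nonneg
        (pow_two_pos_of_ne_zero (ne_of_gt (by linarith)))
        (mul_nonneg (sq_nonneg _) (sq_nonneg _))
    exact mul_pos (pow_pos hνm_pos 2) hne
end

section
/- For ν with ντ ≠ kπ for all integers k, the pair (a, γ) for which iν is a root of the characteristic equation is given by a = ±(ν² − ω²)/(ν sin(ντ)) and γ = ((ν² − ω²)/(ν sin(ντ)))(cos(ντ) ∓ 1). -/
/-- For `ν` with `sin(ντ) ≠ 0`, substituting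
`a = ±(ν² − ω²)/(ν sin(ντ))` and `γ = ((ν² − ω²)/(ν sin(ντ)))(cos(ντ) ∓ 1)`
makes both the real part equation `ω² − ν² ± aν sin(ντ) = 0` and the imaginary
part equation `−(γ+a) ± a cos(ντ) = 0` hold. -/
theorem hkb_gamma_a_parameterisation (ω τ ν t a γ : ℝ) (hω : 0 < ω) (hτ : 0 < τ)
    (hν : 0 < ν) (ht : t = 1 ∨ t = -1) (hsin : Real.sin (ν*τ) ≠ 0)
    (ha : a = t * (ν^2 - ω^2) / (ν * Real.sin (ν*τ)))
    (hγ : γ = (ν^2 - ω^2) / (ν * Real.sin (ν*τ)) * (Real.cos (ν*τ) - t)) :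
    ω^2 - ν^2 + t * a * ν * Real.sin (ν*τ) = 0 ∧
    -(γ + a) + t * a * Real.cos (ν*τ) = 0 := by
  have hne : ν * Real.sin (ν*τ) ≠ 0 := mul_ne_zero hν.ne' hsin
  subst ha hγ
  rcases ht with rfl | rfl <;>
    constructor <;> field_simp <;> ring
end

section
/- With ξ := 1 + ω²/ν² − (γ+a)τ, along the parameterised curve a(ν), γ(ν) of purely imaginary roots one has da/dγ = ξ / ((γ/a)ξ − aτ sin²(ντ)); consequently, for a ≠ 0, da/dγ = 0 if and only if ξ = 0. -/
/-- With `ξ = 1 + ω²/ν² − (γ+a)τ`, along the parameterised curve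
`a(ν), γ(ν)` of purely imaginary roots one has
`da/dγ = ξ / ((γ/a)ξ − aτ sin²(ντ))`; consequently, `da/dγ = 0 ↔ ξ = 0`. -/
theorem hkb_da_dgamma (ω τ t : ℝ) (hω : 0 < ω) (hτ : 0 < τ)
    (ht : t = 1 ∨ t = -1) (aF gF : ℝ → ℝ)
    (haF : aF = fun ν => t * (ν^2 - ω^2) / (ν * Real.sin (ν*τ)))
    (hgF : gF = fun ν => (ν^2 - ω^2) / (ν * Real.sin (ν*τ)) * (Real.cos (ν*τ) - t))
    (ν : ℝ) (hν : 0 < ν) (hsin : Real.sin (ν*τ) ≠ 0) (ha : aF ν ≠ 0)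
    (ξ : ℝ) (hξ : ξ = 1 + ω^2/ν^2 - (gF ν + aF ν)*τ)
    (hden : (gF ν / aF ν) * ξ - aF ν * τ * (Real.sin (ν*τ))^2 ≠ 0) :
    deriv aF ν / deriv gF ν = ξ / ((gF ν / aF ν) * ξ - aF ν * τ * (Real.sin (ν*τ))^2) ∧
    (deriv aF ν / deriv gF ν = 0 ↔ ξ = 0) := by
  have hν0 : ν ≠ 0 := ne_of_gt hν
  have ht0 : t ≠ 0 := by rcases ht with h | h <;> simp [h]
  set s : ℝ := Real.sin (ν*τ) with hsdef
  set c : ℝ := Real.cos (ν*τ) with hcdef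
  have hden0 : ν * s ≠ 0 := mul_ne_zero hν0 hsin
  have hN0 : ν^2 - ω^2 ≠ 0 := by
    intro h
    apply ha
    rw [haF]
    simp [h]
  have hsin' : HasDerivAt (fun x : ℝ => Real.sin (x*τ)) (c*τ) ν := by
    simpa [Function.comp_def] using (Real.hasDerivAt_sin (ν*τ)).comp ν ((hasDerivAt_id ν).mul_const τ)
  have hcos' : HasDerivAt (fun x : ℝ => Real.cos (x*τ)) (-s*τ) ν := by
    simpa [Function.comp_def] using (Real.hasDerivAt_cos (ν*τ)).comp ν ((hasDerivAt_id ν).mul_const τ)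
  have hD : HasDerivAt (fun x : ℝ => x * Real.sin (x*τ)) (1 * s + ν * (c*τ)) ν :=
    (hasDerivAt_id ν).mul hsin'
  have hN : HasDerivAt (fun x : ℝ => x^2 - ω^2) (2*ν) ν := by
    simpa using ((hasDerivAt_pow 2 ν).sub_const (ω^2))
  set df : ℝ := (2*ν*(ν*s) - (ν^2-ω^2)*(1*s+ν*(c*τ)))/(ν*s)^2 with hdf
  have hf : HasDerivAt (fun x : ℝ => (x^2-ω^2)/(x*Real.sin (x*τ))) df ν :=
    hN.div hD hden0
  have hA : HasDerivAt aF (t*df) ν := by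
    rw [haF]
    simpa [mul_div_assoc] using hf.const_mul t
  have hG : HasDerivAt gF (df*(c-t) + ((ν^2-ω^2)/(ν*s))*(-s*τ)) ν := by
    rw [hgF]
    exact hf.mul (hcos'.sub_const t)
  -- basic values
  have hav : aF ν = t * (ν^2 - ω^2) / (ν * s) := by rw [haF]
  have hgv : gF ν = (ν^2 - ω^2) / (ν * s) * (c - t) := by rw [hgF]
  have hratio : gF ν / aF ν = (c - t) / t := by
    rw [hav, hgv]
    field_simp
  have hsum : gF ν + aF ν = (ν^2 - ω^2) / (ν*s) * c := by
    rw [hav, hgv]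
    rcases ht with h | h <;> subst h <;> field_simp <;> ring
  have hdfs : df = ξ / s := by
    rw [hdf, hξ, hsum]
    field_simp
    ring
  have hda : deriv aF ν = t * ξ / s := by
    rw [hA.deriv, hdfs]
    ring
  have hdg : deriv gF ν =
      t * ((gF ν / aF ν) * ξ - aF ν * τ * s^2) / s := by
    rw [hG.deriv, hdfs, hratio, hav]
    rcases ht with h | h <;> subst h <;> field_simp <;> ring
  have hmain : deriv aF ν / deriv gF ν =
      ξ / ((gF ν / aF ν) * ξ - aF ν * τ * s^2) := by
    rw [hda, hdg, div_div_div_comm, div_self hsin, div_one,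
      mul_div_mul_left _ _ ht0]
  refine ⟨hmain, ?_⟩
  rw [hmain, div_eq_zero_iff]
  simp [hden]
end
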